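/- If G is an edge-critical triangle-free graph, then for every vertex v of G, the independence number of the graph obtained by deleting v and all its neighbours equals α(G) − 1. -/

import Mathlib

open SimpleGraph

/-- The independence number of a graph. -/
noncomputable def indepNum {V : Type} (G : SimpleGraph V) : ℕ :=
  sSup {n : ℕ | ∃ s : Set V, s.Finite ∧ s.ncard = n ∧ ∀ a ∈ s, ∀ b ∈ s, ¬ G.Adj a b}

/-- The number of edges of a graph. -/
noncomputable def numEdges {V : Type} (G : SimpleGraph V) : ℕ := G.edgeSet.ncard

/-- The degree (valency) of a vertex. -/
noncomputable def deg {V : Type} (G : SimpleGraph V) (v : V) : ℕ := (G.neighborSet v).ncard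

/-- The second valency `d²(v) = ∑_{w ∈ N(v)} d(w)`. -/
noncomputable def secondDeg {V : Type} (G : SimpleGraph V) (v : V) : ℕ :=
  ∑ᶠ w ∈ G.neighborSet v, deg G w

/-- `p = (a,b,c,d)` is an (ordered) 4-cycle of `G`. -/
def IsC4 {V : Type} (G : SimpleGraph V) (p : V × V × V × V) : Prop :=
  G.Adj p.1 p.2.1 ∧ G.Adj p.2.1 p.2.2.1 ∧ G.Adj p.2.2.1 p.2.2.2 ∧
    G.Adj p.2.2.2 p.1 ∧ p.1 ≠ p.2.2.1 ∧ p.2.1 ≠ p.2.2.2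

/-- The number of 4-cycles of `G`; each 4-cycle yields 8 ordered tuples. -/
noncomputable def numC4 {V : Type} (G : SimpleGraph V) : ℕ :=
  {p : V × V × V × V | IsC4 G p}.ncard / 8

/-- The number of 4-cycles of `G` containing a vertex of `S`. -/
noncomputable def numC4Through {V : Type} (G : SimpleGraph V) (S : Set V) : ℕ :=
  {p : V × V × V × V | IsC4 G p ∧ (p.1 ∈ S ∨ p.2.1 ∈ S ∨ p.2.2.1 ∈ S ∨ p.2.2.2 ∈ S)}.ncard / 8

/-- The invariant `ν(G) = 3e(G) − 17n(G) + 35α(G) + N(C₄;G)`. -/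
noncomputable def nu {V : Type} (G : SimpleGraph V) : ℤ :=
  3 * (numEdges G : ℤ) - 17 * (Nat.card V : ℤ) + 35 * (_root_.indepNum G : ℤ) + (numC4 G : ℤ)

/-- The closed neighbourhood `N[v]`. -/
def closedNbhd {V : Type} (G : SimpleGraph V) (v : V) : Set V := insert v (G.neighborSet v)

/-- `S` destabilises `G` : removing `S` decreases the independence number. -/
def Destab {V : Type} (G : SimpleGraph V) (S : Set V) : Prop :=
  _root_.indepNum (G.induce Sᶜ) < _root_.indepNum G

/-- `G` is edge-critical (α-critical): removing any edge increases the independence number. -/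
def EdgeCritical {V : Type} (G : SimpleGraph V) : Prop :=
  ∀ e ∈ G.edgeSet, _root_.indepNum G < _root_.indepNum (G.deleteEdges {e})

lemma indep_bddAbove {V : Type} [Finite V] (G : SimpleGraph V) :
    BddAbove {n : ℕ | ∃ s : Set V, s.Finite ∧ s.ncard = n ∧ ∀ a ∈ s, ∀ b ∈ s, ¬ G.Adj a b} := by
  refine ⟨Nat.card V, ?_⟩
  rintro n ⟨s, hf, rfl, -⟩
  calc s.ncard ≤ (Set.univ : Set V).ncard :=
        Set.ncard_le_ncard (Set.subset_univ s) Set.finite_univ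
    _ = Nat.card V := Set.ncard_univ V

lemma indep_nonempty {V : Type} (G : SimpleGraph V) :
    (0 : ℕ) ∈ {n : ℕ | ∃ s : Set V, s.Finite ∧ s.ncard = n ∧ ∀ a ∈ s, ∀ b ∈ s, ¬ G.Adj a b} :=
  ⟨∅, Set.finite_empty, by simp, by simp⟩

lemma le_indepNum {V : Type} [Finite V] (G : SimpleGraph V) (s : Set V)
    (hind : ∀ a ∈ s, ∀ b ∈ s, ¬ G.Adj a b) : s.ncard ≤ _root_.indepNum G :=
  le_csSup (indep_bddAbove G) ⟨s, Set.toFinite s, rfl, hind⟩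

lemma exists_max_indep {V : Type} [Finite V] (G : SimpleGraph V) :
    ∃ s : Set V, s.ncard = _root_.indepNum G ∧ ∀ a ∈ s, ∀ b ∈ s, ¬ G.Adj a b := by
  have h := Nat.sSup_mem ⟨0, indep_nonempty G⟩ (indep_bddAbove G)
  obtain ⟨s, -, hc, hind⟩ := h
  exact ⟨s, hc, hind⟩

lemma pull_indep {V : Type} [Finite V] (G : SimpleGraph V) (S : Set V) (t : Set V)
    (ht : t ⊆ Sᶜ) (hind : ∀ a ∈ t, ∀ b ∈ t, ¬ G.Adj a b) :
    t.ncard ≤ _root_.indepNum (G.induce Sᶜ) := by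
  set t' : Set ↥Sᶜ := Subtype.val ⁻¹' t with ht'
  have himg : Subtype.val '' t' = t := by
    ext x
    constructor
    · rintro ⟨y, hy, rfl⟩; exact hy
    · intro hx; exact ⟨⟨x, ht hx⟩, hx, rfl⟩
  have hcard : t'.ncard = t.ncard := by
    rw [← himg, Set.ncard_image_of_injective _ Subtype.val_injective]
  rw [← hcard]
  apply le_indepNum
  intro a ha b hb hadj
  exact hind a ha b hb hadj

/-- If `G` is an edge-critical triangle-free graph, then for every vertex `v`,
`α(G_v) = α(G) − 1`, where `G_v` is obtained by deleting `N[v]`. -/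
theorem stmt0 {V : Type} [Fintype V] (G : SimpleGraph V) (h3 : G.CliqueFree 3)
    (hec : EdgeCritical G) (v : V) :
    _root_.indepNum (G.induce (closedNbhd G v)ᶜ) = _root_.indepNum G - 1 := by
  set S := closedNbhd G v with hS
  -- upper bound: α(G_v) + 1 ≤ α(G)
  have hub : _root_.indepNum (G.induce Sᶜ) + 1 ≤ _root_.indepNum G := by
    obtain ⟨s', hcard, hind⟩ := exists_max_indep (G.induce Sᶜ)
    set t : Set V := insert v (Subtype.val '' s') with htdef
    have hvnot : v ∉ Subtype.val '' s' := by
      rintro ⟨y, -, hy⟩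
      exact y.2 (hy ▸ Set.mem_insert v _)
    have hnadj : ∀ x ∈ Subtype.val '' s', ¬ G.Adj v x := by
      rintro x ⟨y, hy, rfl⟩ hadj
      exact y.2 (Set.mem_insert_of_mem _ hadj)
    have htind : ∀ a ∈ t, ∀ b ∈ t, ¬ G.Adj a b := by
      intro a ha b hb hadj
      rcases ha with rfl | ha
      · rcases hb with rfl | hb
        · exact G.irrefl hadj
        · exact hnadj b hb hadj
      · rcases hb with rfl | hb
        · exact hnadj a ha hadj.symm
        · obtain ⟨ya, hya, rfl⟩ := ha
          obtain ⟨yb, hyb, rfl⟩ := hb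
          exact hind ya hya yb hyb hadj
    have : t.ncard = s'.ncard + 1 := by
      rw [htdef, Set.ncard_insert_of_notMem hvnot,
        Set.ncard_image_of_injective _ Subtype.val_injective]
    have := le_indepNum G t htind
    omega
  -- lower bound: α(G) ≤ α(G_v) + 1
  have hlb : _root_.indepNum G ≤ _root_.indepNum (G.induce Sᶜ) + 1 := by
    by_cases hnb : ∃ u, G.Adj v u
    · obtain ⟨u, hvu⟩ := hnb
      have he : s(v, u) ∈ G.edgeSet := G.mem_edgeSet.mpr hvu
      have hcrit := hec _ he
      obtain ⟨s, hcard, hind⟩ := exists_max_indep (G.deleteEdges {s(v, u)})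
      have hkey : ∀ a ∈ s, ∀ b ∈ s, G.Adj a b → s(a, b) = s(v, u) := by
        intro a ha b hb hadj
        by_contra hne
        exact hind a ha b hb (by simp [SimpleGraph.deleteEdges_adj, hadj, hne])
      have hvins : v ∈ s := by
        by_contra hv
        have : ∀ a ∈ s, ∀ b ∈ s, ¬ G.Adj a b := by
          intro a ha b hb hadj
          rcases Sym2.eq_iff.mp (hkey a ha b hb hadj) with ⟨rfl, rfl⟩ | ⟨rfl, rfl⟩
          · exact hv ha
          · exact hv hb
        have := le_indepNum G s this
        omega
      have huins : u ∈ s := by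
        by_contra hu
        have : ∀ a ∈ s, ∀ b ∈ s, ¬ G.Adj a b := by
          intro a ha b hb hadj
          rcases Sym2.eq_iff.mp (hkey a ha b hb hadj) with ⟨rfl, rfl⟩ | ⟨rfl, rfl⟩
          · exact hu hb
          · exact hu ha
        have := le_indepNum G s this
        omega
      set t : Set V := s \ {v, u} with htdef
      have hvu_ne : v ≠ u := G.ne_of_adj hvu
      have htsub : t ⊆ Sᶜ := by
        rintro x ⟨hxs, hxnot⟩
        simp only [Set.mem_insert_iff, not_or] at hxnot
        intro hxS
        rcases hxS with rfl | hxn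
        · exact hxnot.1 rfl
        · -- x ∈ neighborSet v, so G.Adj v x
          have hadj : G.Adj v x := hxn
          rcases Sym2.eq_iff.mp (hkey v hvins x hxs hadj) with ⟨-, rfl⟩ | ⟨h1, -⟩
          · exact hxnot.2 rfl
          · exact hvu_ne h1
      have htind : ∀ a ∈ t, ∀ b ∈ t, ¬ G.Adj a b := by
        rintro a ⟨has, hanot⟩ b ⟨hbs, hbnot⟩ hadj
        simp only [Set.mem_insert_iff, not_or] at hanot hbnot
        rcases Sym2.eq_iff.mp (hkey a has b hbs hadj) with ⟨rfl, rfl⟩ | ⟨rfl, rfl⟩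
        · exact hanot.1 rfl
        · exact hanot.2 rfl
      have hssub : s ⊆ insert v (insert u t) := by
        intro x hx
        by_cases hxv : x = v
        · exact hxv ▸ Set.mem_insert _ _
        by_cases hxu : x = u
        · exact Set.mem_insert_of_mem _ (hxu ▸ Set.mem_insert _ _)
        · exact Set.mem_insert_of_mem _ (Set.mem_insert_of_mem _
            ⟨hx, by simp [hxv, hxu]⟩)
      have hcount : s.ncard ≤ t.ncard + 2 := by
        calc s.ncard ≤ (insert v (insert u t)).ncard :=
              Set.ncard_le_ncard hssub (Set.toFinite _)
          _ ≤ (insert u t).ncard + 1 := Set.ncard_insert_le _ _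
          _ ≤ t.ncard + 1 + 1 := by
              have := Set.ncard_insert_le u t; omega
          _ = t.ncard + 2 := by ring
      have := pull_indep G S t htsub htind
      omega
    · push_neg at hnb
      obtain ⟨s, hcard, hind⟩ := exists_max_indep G
      set t : Set V := s \ {v} with htdef
      have htsub : t ⊆ Sᶜ := by
        rintro x ⟨hxs, hxne⟩
        intro hxS
        rcases hxS with rfl | hxn
        · exact hxne rfl
        · exact hnb x hxn
      have htind : ∀ a ∈ t, ∀ b ∈ t, ¬ G.Adj a b := by
        rintro a ⟨has, -⟩ b ⟨hbs, -⟩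
        exact hind a has b hbs
      have hssub : s ⊆ insert v t := by
        intro x hx
        by_cases hxv : x = v
        · exact hxv ▸ Set.mem_insert _ _
        · exact Set.mem_insert_of_mem _ ⟨hx, hxv⟩
      have hcount : s.ncard ≤ t.ncard + 1 := by
        calc s.ncard ≤ (insert v t).ncard := Set.ncard_le_ncard hssub (Set.toFinite _)
          _ ≤ t.ncard + 1 := Set.ncard_insert_le _ _
      have := pull_indep G S t htsub htind
      omega
  -- α(G) ≥ 1 since {v} is independent
  have hpos : 1 ≤ _root_.indepNum G := by
    have := le_indepNum G {v} (by simp)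
    simpa using this
  omega
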